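/- arXiv:1002.1127 — 3 statements merged into one kernel-verified Lean document; each statement's English description precedes it below -/
import Mathlib

section
/- Let $b>0$, $a\in L^\infty(\mathbb{R}^+)$ with $a\ge 0$ a.e., and define $B^*v = (\partial_x+b)v + (\partial_x+b)^3v - a(x)v$ on $D(B^*)=\{v\in H^3(\mathbb{R}^+): v(0)=v'(0)=0\}$. Then for every $v\in D(B^*)$, $(v,[B^*-(b^3+b)]v)_{L^2(\mathbb{R}^+)}\le 0$. -/
open MeasureTheory Set Filter

lemma sq_prod_int {f g : ℝ → ℝ}
    (hf : AEStronglyMeasurable f (volume.restrict (Ioi (0:ℝ))))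
    (hg : AEStronglyMeasurable g (volume.restrict (Ioi (0:ℝ))))
    (hf2 : IntegrableOn (fun x => (f x)^2) (Ioi 0))
    (hg2 : IntegrableOn (fun x => (g x)^2) (Ioi 0)) :
    IntegrableOn (fun x => f x * g x) (Ioi 0) := by
  refine ((hf2.add hg2).const_mul (1/2 : ℝ)).mono' (hf.mul hg) ?_
  filter_upwards with x
  simp only [Pi.add_apply, Real.norm_eq_abs]
  rw [abs_mul]
  nlinarith [sq_nonneg (|f x| - |g x|), sq_abs (f x), sq_abs (g x),
    abs_nonneg (f x), abs_nonneg (g x)]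

theorem stmt_5 (b : ℝ) (hb : 0 < b) (a : ℝ → ℝ)
    (ha_meas : Measurable a)
    (ha_bdd : ∃ M, ∀ᵐ x ∂(volume.restrict (Ioi (0:ℝ))), |a x| ≤ M)
    (ha_pos : ∀ᵐ x ∂(volume.restrict (Ioi (0:ℝ))), 0 ≤ a x)
    (v v' v'' v''' : ℝ → ℝ)
    (hd1 : ∀ x, HasDerivAt v (v' x) x)
    (hd2 : ∀ x, HasDerivAt v' (v'' x) x)
    (hd3 : ∀ x, HasDerivAt v'' (v''' x) x)
    (hbc0 : v 0 = 0) (hbc1 : v' 0 = 0)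
    (hv : IntegrableOn (fun x => (v x)^2) (Ioi 0))
    (hv1 : IntegrableOn (fun x => (v' x)^2) (Ioi 0))
    (hv2 : IntegrableOn (fun x => (v'' x)^2) (Ioi 0))
    (hv3 : IntegrableOn (fun x => (v''' x)^2) (Ioi 0))
    (hlim : Tendsto v atTop (nhds 0)) (hlim1 : Tendsto v' atTop (nhds 0))
    (hlim2 : Tendsto v'' atTop (nhds 0)) :
    (∫ x in Ioi (0:ℝ),
        v x * (((v' x + b * v x) + (v''' x + 3*b*v'' x + 3*b^2*v' x + b^3*v x) - a x * v x)
          - (b^3 + b) * v x)) ≤ 0 := by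
  have hcv : Continuous v :=
    continuous_iff_continuousAt.2 fun x => (hd1 x).differentiableAt.continuousAt
  have hcv1 : Continuous v' :=
    continuous_iff_continuousAt.2 fun x => (hd2 x).differentiableAt.continuousAt
  have hcv2 : Continuous v'' :=
    continuous_iff_continuousAt.2 fun x => (hd3 x).differentiableAt.continuousAt
  have hv3eq : v''' = deriv v'' := funext fun x => ((hd3 x).deriv).symm
  have hmv3 : AEStronglyMeasurable v''' (volume.restrict (Ioi (0:ℝ))) := by
    rw [hv3eq]; exact (measurable_deriv v'').aestronglyMeasurable
  have mv := hcv.aestronglyMeasurable (μ := volume.restrict (Ioi (0:ℝ)))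
  have mv1 := hcv1.aestronglyMeasurable (μ := volume.restrict (Ioi (0:ℝ)))
  have mv2 := hcv2.aestronglyMeasurable (μ := volume.restrict (Ioi (0:ℝ)))
  -- integrability of products
  have hInt01 : IntegrableOn (fun x => v x * v' x) (Ioi 0) := sq_prod_int mv mv1 hv hv1
  have hInt02 : IntegrableOn (fun x => v x * v'' x) (Ioi 0) := sq_prod_int mv mv2 hv hv2
  have hInt03 : IntegrableOn (fun x => v x * v''' x) (Ioi 0) := sq_prod_int mv hmv3 hv hv3
  have hInt12 : IntegrableOn (fun x => v' x * v'' x) (Ioi 0) := sq_prod_int mv1 mv2 hv1 hv2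
  have hInt11 : IntegrableOn (fun x => v' x * v' x) (Ioi 0) := by
    simpa [pow_two] using hv1
  have haInt : IntegrableOn (fun x => a x * (v x)^2) (Ioi 0) := by
    obtain ⟨M, hM⟩ := ha_bdd
    refine (hv.const_mul M).mono'
      (ha_meas.aestronglyMeasurable.mul ((hcv.pow 2).aestronglyMeasurable)) ?_
    filter_upwards [hM] with x hx
    rw [Real.norm_eq_abs, abs_mul, abs_of_nonneg (sq_nonneg (v x))]
    exact mul_le_mul_of_nonneg_right hx (sq_nonneg _)
  -- integration by parts identities
  have h1 : ∫ x in Ioi (0:ℝ), v x * v' x = 0 := by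
    have hres := integral_Ioi_of_hasDerivAt_of_tendsto
      (f := fun x => v x * v x / 2) (f' := fun x => v x * v' x) (a := 0) (m := 0)
      ((hcv.mul hcv).div_const 2).continuousWithinAt
      (fun x _ => by
        have := ((hd1 x).mul (hd1 x)).div_const 2
        exact this.congr_deriv (by ring))
      hInt01
      (by simpa using (hlim.mul hlim).div_const 2)
    simpa [hbc0] using hres
  have h3 : ∫ x in Ioi (0:ℝ), v' x * v'' x = 0 := by
    have hres := integral_Ioi_of_hasDerivAt_of_tendsto
      (f := fun x => v' x * v' x / 2) (f' := fun x => v' x * v'' x) (a := 0) (m := 0)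
      ((hcv1.mul hcv1).div_const 2).continuousWithinAt
      (fun x _ => by
        have := ((hd2 x).mul (hd2 x)).div_const 2
        exact this.congr_deriv (by ring))
      hInt12
      (by simpa using (hlim1.mul hlim1).div_const 2)
    simpa [hbc1] using hres
  have h2 : ∫ x in Ioi (0:ℝ), v x * v'' x = -∫ x in Ioi (0:ℝ), v' x * v' x := by
    have hres := integral_Ioi_of_hasDerivAt_of_tendsto
      (f := fun x => v x * v' x) (f' := fun x => v' x * v' x + v x * v'' x) (a := 0) (m := 0)
      (hcv.mul hcv1).continuousWithinAt
      (fun x _ => (hd1 x).mul (hd2 x))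
      (hInt11.add hInt02)
      (by simpa using hlim.mul hlim1)
    rw [integral_add hInt11 hInt02] at hres
    have : (∫ x in Ioi (0:ℝ), v' x * v' x) + ∫ x in Ioi (0:ℝ), v x * v'' x = 0 := by
      simpa [hbc0] using hres
    linarith
  have h4 : ∫ x in Ioi (0:ℝ), v x * v''' x = 0 := by
    have hres := integral_Ioi_of_hasDerivAt_of_tendsto
      (f := fun x => v x * v'' x) (f' := fun x => v' x * v'' x + v x * v''' x) (a := 0) (m := 0)
      (hcv.mul hcv2).continuousWithinAt
      (fun x _ => (hd1 x).mul (hd3 x))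
      (hInt12.add hInt03)
      (by simpa using hlim.mul hlim2)
    rw [integral_add hInt12 hInt03] at hres
    have h0 : (∫ x in Ioi (0:ℝ), v' x * v'' x) + ∫ x in Ioi (0:ℝ), v x * v''' x = 0 := by
      simpa [hbc0] using hres
    linarith [h3]
  -- decompose the main integrand
  have key : ∀ x, v x * (((v' x + b * v x) + (v''' x + 3*b*v'' x + 3*b^2*v' x + b^3*v x)
        - a x * v x) - (b^3 + b) * v x)
      = (v x * v' x + v x * v''' x + 3*b*(v x * v'' x) + 3*b^2*(v x * v' x))
        - a x * (v x)^2 := fun x => by ring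
  rw [show (fun x => v x * (((v' x + b * v x) + (v''' x + 3*b*v'' x + 3*b^2*v' x + b^3*v x)
        - a x * v x) - (b^3 + b) * v x))
      = fun x => (v x * v' x + v x * v''' x + 3*b*(v x * v'' x) + 3*b^2*(v x * v' x))
        - a x * (v x)^2 from funext key]
  have hD : IntegrableOn (fun x => 3*b*(v x * v'' x)) (Ioi 0) := hInt02.const_mul (3*b)
  have hE : IntegrableOn (fun x => 3*b^2*(v x * v' x)) (Ioi 0) := hInt01.const_mul (3*b^2)
  have hC : IntegrableOn (fun x => v x * v' x + v x * v''' x) (Ioi 0) := hInt01.add hInt03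
  have hB : IntegrableOn (fun x => v x * v' x + v x * v''' x + 3*b*(v x * v'' x)) (Ioi 0) :=
    hC.add hD
  have hA : IntegrableOn (fun x => v x * v' x + v x * v''' x + 3*b*(v x * v'' x)
      + 3*b^2*(v x * v' x)) (Ioi 0) := hB.add hE
  rw [integral_sub hA haInt, integral_add hB hE, integral_add hC hD,
     integral_add hInt01 hInt03, integral_const_mul, integral_const_mul]
  have hJ : 0 ≤ ∫ x in Ioi (0:ℝ), v' x * v' x :=
    integral_nonneg fun x => mul_self_nonneg _
  have hK : 0 ≤ ∫ x in Ioi (0:ℝ), a x * (v x)^2 := by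
    refine integral_nonneg_of_ae ?_
    filter_upwards [ha_pos] with x hx
    exact mul_nonneg hx (sq_nonneg _)
  rw [h1, h2, h4]
  nlinarith [hb.le]
end

section
/- Let $m\ge 1$ and $u\in H^1(\mathbb{R}^+)$ with $u(0)=0$ and $\int_0^\infty (x+1)^{m-1}u^2dx \le 1$. Then for every $\varepsilon>0$ there is $c_\varepsilon>0$ (independent of $u$) such that $\int_0^\infty (x+1)^{m-1}|u|^3dx \le \varepsilon\int_0^\infty (x+1)^{m-1}u_x^2dx + c_\varepsilon\big(\int_0^\infty u^2dx + \int_0^\infty (x+1)^{m-1}u^2dx\big)$. -/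
open MeasureTheory Set Filter

theorem stmt_12 (m : ℕ) (hm : 1 ≤ m) : ∀ ε > (0:ℝ), ∃ c > (0:ℝ), ∀ u u' : ℝ → ℝ,
    u 0 = 0 → (∀ x ∈ Ici (0:ℝ), HasDerivAt u (u' x) x) →
    IntegrableOn (fun x => (u x)^2) (Ioi 0) →
    IntegrableOn (fun x => (u' x)^2) (Ioi 0) →
    IntegrableOn (fun x => (x+1)^(m-1) * (u x)^2) (Ioi 0) →
    IntegrableOn (fun x => (x+1)^(m-1) * (u' x)^2) (Ioi 0) →
    IntegrableOn (fun x => (x+1)^(m-1) * |u x|^3) (Ioi 0) →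
    (∫ x in Ioi (0:ℝ), (x+1)^(m-1) * (u x)^2) ≤ 1 →
    (∫ x in Ioi (0:ℝ), (x+1)^(m-1) * |u x|^3) ≤
      ε * (∫ x in Ioi (0:ℝ), (x+1)^(m-1) * (u' x)^2)
        + c * ((∫ x in Ioi (0:ℝ), (u x)^2)
          + (∫ x in Ioi (0:ℝ), (x+1)^(m-1) * (u x)^2)) := by
  intro ε hε
  refine ⟨1 + 1/ε, by positivity, ?_⟩
  intro u u' hu0 hu hA hB hW hB' h3 hW1
  set A := ∫ x in Ioi (0:ℝ), (u x)^2 with hAdef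
  set B := ∫ x in Ioi (0:ℝ), (u' x)^2 with hBdef
  set W := ∫ x in Ioi (0:ℝ), (x+1)^(m-1) * (u x)^2 with hWdef
  set B2 := ∫ x in Ioi (0:ℝ), (x+1)^(m-1) * (u' x)^2 with hB2def
  have hA0 : 0 ≤ A := setIntegral_nonneg measurableSet_Ioi fun x _ => sq_nonneg _
  have hB0 : 0 ≤ B := setIntegral_nonneg measurableSet_Ioi fun x _ => sq_nonneg _
  have hW0 : 0 ≤ W := setIntegral_nonneg measurableSet_Ioi fun x hx =>
    mul_nonneg (pow_nonneg (by linarith [mem_Ioi.1 hx]) _) (sq_nonneg _)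
  -- measurability
  have hum : AEStronglyMeasurable u (volume.restrict (Ioi 0)) := by
    have hc : ContinuousOn u (Ioi 0) := fun x hx =>
      (hu x (mem_Ici.2 (le_of_lt (mem_Ioi.1 hx)))).continuousAt.continuousWithinAt
    exact hc.aestronglyMeasurable measurableSet_Ioi
  have hu'm : AEStronglyMeasurable u' (volume.restrict (Ioi 0)) := by
    refine ((measurable_deriv u).aestronglyMeasurable.restrict).congr ?_
    refine (ae_restrict_iff' measurableSet_Ioi).2 (ae_of_all _ fun x hx => ?_)
    exact (hu x (mem_Ici.2 (le_of_lt (mem_Ioi.1 hx)))).deriv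
  have huu' : IntegrableOn (fun x => u x * u' x) (Ioi 0) := by
    refine Integrable.mono' ((hA.add hB).div_const 2) (hum.mul hu'm)
      (ae_of_all _ fun x => ?_)
    have hb : |u x * u' x| ≤ (u x ^ 2 + u' x ^ 2) / 2 := by
      rcases abs_cases (u x * u' x) with ⟨h1, _⟩ | ⟨h1, _⟩ <;> rw [h1] <;>
        nlinarith [sq_nonneg (u x - u' x), sq_nonneg (u x + u' x)]
    simpa [Real.norm_eq_abs, abs_mul, Pi.add_apply] using hb
  -- key pointwise bound
  have key : ∀ b : ℝ, 0 ≤ b → u b ^ 2 ≤ 1/ε * A + ε * B := by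
    intro b hb
    have hftc := intervalIntegral.integral_eq_sub_of_hasDerivAt
      (f := fun t => u t ^ 2) (f' := fun t => 2 * (u t * u' t)) (a := 0) (b := b)
      (fun t ht => by
        rw [uIcc_of_le hb] at ht
        exact ((hu t ht.1).pow 2).congr_deriv (by norm_num [mul_assoc]))
      (by
        rw [intervalIntegrable_iff]
        refine IntegrableOn.mono_set (huu'.const_mul 2) ?_
        rw [uIoc_of_le hb]
        exact Ioc_subset_Ioi_self)
    have heq : u b ^ 2 = ∫ t in Ioc (0:ℝ) b, (2 * (u t * u' t)) := by
      rw [intervalIntegral.integral_of_le hb] at hftc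
      simp only [hu0] at hftc
      simpa using hftc.symm
    have hle1 : (∫ t in Ioc (0:ℝ) b, (2 * (u t * u' t)))
        ≤ ∫ t in Ioc (0:ℝ) b, (1/ε * u t ^ 2 + ε * u' t ^ 2) := by
      refine setIntegral_mono_on (IntegrableOn.mono_set (huu'.const_mul 2) Ioc_subset_Ioi_self)
        (IntegrableOn.mono_set ((hA.const_mul (1/ε)).add (hB.const_mul ε)) Ioc_subset_Ioi_self)
        measurableSet_Ioc (fun t _ => ?_)
      rw [← mul_le_mul_iff_right₀ hε]
      have hne : ε ≠ 0 := ne_of_gt hε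
      field_simp
      nlinarith [sq_nonneg (ε * u' t - u t)]
    have hle2 : (∫ t in Ioc (0:ℝ) b, (1/ε * u t ^ 2 + ε * u' t ^ 2))
        ≤ ∫ t in Ioi (0:ℝ), (1/ε * u t ^ 2 + ε * u' t ^ 2) := by
      refine setIntegral_mono_set ((hA.const_mul (1/ε)).add (hB.const_mul ε))
        (ae_of_all _ fun t => ?_) (ae_of_all _ Ioc_subset_Ioi_self)
      exact add_nonneg (mul_nonneg (one_div_nonneg.2 hε.le) (sq_nonneg _))
        (mul_nonneg hε.le (sq_nonneg _))
    have hsplit : (∫ t in Ioi (0:ℝ), (1/ε * u t ^ 2 + ε * u' t ^ 2))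
        = 1/ε * A + ε * B := by
      rw [integral_add (hA.const_mul (1/ε)) (hB.const_mul ε),
        integral_const_mul, integral_const_mul]
    rw [heq]
    exact (hle1.trans hle2).trans_eq hsplit
  set K := 1/ε * A + ε * B with hKdef
  have hK0 : 0 ≤ K := add_nonneg (mul_nonneg (one_div_nonneg.2 hε.le) hA0)
    (mul_nonneg hε.le hB0)
  -- main integral comparison
  have hmain : (∫ x in Ioi (0:ℝ), (x+1)^(m-1) * |u x|^3)
      ≤ ∫ x in Ioi (0:ℝ), (1 + K) * ((x+1)^(m-1) * (u x)^2) := by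
    refine setIntegral_mono_on h3 (hW.const_mul _) measurableSet_Ioi (fun x hx => ?_)
    have hx0 : (0:ℝ) < x := mem_Ioi.1 hx
    have hw0 : (0:ℝ) ≤ (x+1)^(m-1) := pow_nonneg (by linarith) _
    have h1 : u x ^ 2 ≤ K := key x hx0.le
    have habs : |u x| ^ 3 ≤ (1 + K) * (u x) ^ 2 := by
      have ha : 0 ≤ |u x| := abs_nonneg _
      have ha2 : |u x| ^ 2 = u x ^ 2 := sq_abs _
      nlinarith [mul_nonneg (sq_nonneg (|u x|)) (sq_nonneg (|u x| - 1)),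
        mul_le_mul_of_nonneg_left h1 (sq_nonneg (|u x|))]
    calc (x+1)^(m-1) * |u x|^3 ≤ (x+1)^(m-1) * ((1 + K) * (u x)^2) :=
          mul_le_mul_of_nonneg_left habs hw0
      _ = (1 + K) * ((x+1)^(m-1) * (u x)^2) := by ring
  have hconst : (∫ x in Ioi (0:ℝ), (1 + K) * ((x+1)^(m-1) * (u x)^2)) = (1 + K) * W := by
    rw [integral_const_mul]
  have hBle : B ≤ B2 := by
    refine setIntegral_mono_on hB hB' measurableSet_Ioi (fun x hx => ?_)
    have hx0 : (0:ℝ) < x := mem_Ioi.1 hx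
    have h1 : (1:ℝ) ≤ (x+1)^(m-1) := one_le_pow₀ (by linarith : (1:ℝ) ≤ x+1)
    exact le_mul_of_one_le_left (sq_nonneg _) h1
  have hB20 : 0 ≤ B2 := hB0.trans hBle
  have hKW : K * W ≤ K := mul_le_of_le_one_right hK0 hW1
  have hεB : ε * B ≤ ε * B2 := mul_le_mul_of_nonneg_left hBle hε.le
  have hL : (∫ x in Ioi (0:ℝ), (x+1)^(m-1) * |u x|^3) ≤ (1 + K) * W :=
    hmain.trans_eq hconst
  have hεW : 0 ≤ 1/ε * W := mul_nonneg (one_div_nonneg.2 hε.le) hW0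
  have hεA : 0 ≤ 1/ε * A := mul_nonneg (one_div_nonneg.2 hε.le) hA0
  have hexp : (1 + K) * W = W + K * W := by ring
  have hexp2 : (1 + 1/ε) * (A + W) = A + W + 1/ε * A + 1/ε * W := by ring
  clear_value A B W B2 K
  linarith [hL, hexp, hKW, hKdef, hεB, hexp2, hεW, hεA, hK0, hW0, hA0]
end

section
/- Let $b>0$ and let $u\in H^1_b$ with $\|u\|_{L^2(\mathbb{R}^+)}\le R$. Then for every $\delta>0$ there exists a constant $C_\delta = C(b,\delta,R)>0$ such that $\int_0^\infty |u|^3 e^{2bx}\,dx \le \delta\int_0^\infty u_x^2 e^{2bx}dx + C_\delta\int_0^\infty u^2 e^{2bx}dx$. -/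
open MeasureTheory Set Filter

lemma cs_aux {μ : Measure ℝ} {f g : ℝ → ℝ} (hf : AEStronglyMeasurable f μ)
    (hg : AEStronglyMeasurable g μ) (hf2 : Integrable (fun x => f x ^ 2) μ)
    (hg2 : Integrable (fun x => g x ^ 2) μ) :
    ∫ x, |f x * g x| ∂μ ≤ Real.sqrt (∫ x, f x ^ 2 ∂μ) * Real.sqrt (∫ x, g x ^ 2 ∂μ) := by
  have hpq : Real.HolderConjugate 2 2 := ⟨by norm_num, by norm_num, by norm_num⟩
  have h2 : ENNReal.ofReal (2:ℝ) = 2 := by norm_num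
  have hmf : MemLp f (ENNReal.ofReal (2:ℝ)) μ := by
    rw [h2]; exact (memLp_two_iff_integrable_sq hf).mpr hf2
  have hmg : MemLp g (ENNReal.ofReal (2:ℝ)) μ := by
    rw [h2]; exact (memLp_two_iff_integrable_sq hg).mpr hg2
  have h := MeasureTheory.integral_mul_norm_le_Lp_mul_Lq hpq hmf hmg
  have e1 : ∀ h : ℝ → ℝ, (fun a => ‖h a‖ ^ (2:ℝ)) = fun a => h a ^ 2 := by
    intro h; funext a
    rw [show (2:ℝ) = ((2:ℕ):ℝ) by norm_num, Real.rpow_natCast, Real.norm_eq_abs, sq_abs]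
  rw [e1, e1] at h
  have e2 : ∀ a, ‖f a‖ * ‖g a‖ = |f a * g a| := fun a => by
    rw [Real.norm_eq_abs, Real.norm_eq_abs, abs_mul]
  simp only [e2] at h
  refine h.trans (le_of_eq ?_)
  rw [Real.sqrt_eq_rpow, Real.sqrt_eq_rpow]

lemma final_aux (b R δ A B : ℝ) (hb : 0 < b) (hR : 0 < R) (hδ : 0 < δ)
    (hA : 0 ≤ A) (hB : 0 ≤ B) :
    Real.sqrt (2*(A*B) + 2*b*B^2) * (B * R)
      ≤ δ*A^2 + (R^2/(2*δ) + R*(1+2*b) + 1)*B^2 := by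
  set C : ℝ := R^2/(2*δ) + R*(1+2*b) + 1 with hCdef
  have hC0 : 0 < C := by rw [hCdef]; positivity
  clear_value C
  have hM : 0 ≤ 2*(A*B) + 2*b*B^2 := by positivity
  have hs : Real.sqrt (2*(A*B) + 2*b*B^2) ^ 2 = 2*(A*B) + 2*b*B^2 := Real.sq_sqrt hM
  set s := Real.sqrt (2*(A*B) + 2*b*B^2) with hsdef
  have hs0 : 0 ≤ s := Real.sqrt_nonneg _
  have hRHS : 0 ≤ δ*A^2 + C*B^2 := by positivity
  have hC2δ : 2*δ*C = R^2 + 2*δ*(R*(1+2*b)+1) := by rw [hCdef]; field_simp; ring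
  have c1 : R^2 ≤ 2*δ*C := by nlinarith [mul_pos hδ (by nlinarith : (0:ℝ) < R*(1+2*b)+1)]
  have hCge : R*(1+2*b) ≤ C := by
    have h1 : 0 ≤ R^2/(2*δ) := by positivity
    rw [hCdef]; linarith
  have c2 : R^2*(1+2*b) ≤ C^2 := by
    have h1 : (R*(1+2*b))^2 ≤ C^2 := pow_le_pow_left₀ (by positivity) hCge 2
    nlinarith [mul_nonneg (sq_nonneg R) hb.le]
  have e1 : 2*A*B^3 ≤ A^2*B^2 + B^4 := by nlinarith [sq_nonneg (A*B - B^2)]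
  have t1 : R^2*(2*A*B^3) ≤ R^2*(A^2*B^2 + B^4) :=
    mul_le_mul_of_nonneg_left e1 (sq_nonneg R)
  have t2 : R^2*(A^2*B^2) ≤ (2*δ*C)*(A^2*B^2) :=
    mul_le_mul_of_nonneg_right c1 (by positivity)
  have t3 : R^2*(1+2*b)*B^4 ≤ C^2*B^4 := mul_le_mul_of_nonneg_right c2 (by positivity)
  have hsq : (s*(B*R))^2 ≤ (δ*A^2 + C*B^2)^2 := by
    have h2 : (s*(B*R))^2 = R^2*B^2*(2*(A*B) + 2*b*B^2) := by
      rw [mul_pow, mul_pow, hs]; ring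
    rw [h2]
    nlinarith [sq_nonneg (δ*A^2), t1, t2, t3]
  calc s*(B*R) = Real.sqrt ((s*(B*R))^2) := (Real.sqrt_sq (by positivity)).symm
    _ ≤ Real.sqrt ((δ*A^2 + C*B^2)^2) := Real.sqrt_le_sqrt hsq
    _ = δ*A^2 + C*B^2 := Real.sqrt_sq hRHS

set_option maxHeartbeats 1000000 in
theorem stmt_19 (b R : ℝ) (hb : 0 < b) (hR : 0 < R) :
    ∀ δ > (0:ℝ), ∃ C > (0:ℝ), ∀ u u' : ℝ → ℝ,
      u 0 = 0 → (∀ x ∈ Ici (0:ℝ), HasDerivAt u (u' x) x) →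
      IntegrableOn (fun x => (u x)^2 * Real.exp (2*b*x)) (Ioi 0) →
      IntegrableOn (fun x => (u' x)^2 * Real.exp (2*b*x)) (Ioi 0) →
      IntegrableOn (fun x => |u x|^3 * Real.exp (2*b*x)) (Ioi 0) →
      Real.sqrt (∫ x in Ioi (0:ℝ), (u x)^2) ≤ R →
      (∫ x in Ioi (0:ℝ), |u x|^3 * Real.exp (2*b*x)) ≤
        δ * (∫ x in Ioi (0:ℝ), (u' x)^2 * Real.exp (2*b*x))
          + C * (∫ x in Ioi (0:ℝ), (u x)^2 * Real.exp (2*b*x)) := by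
  intro δ hδ
  refine ⟨R^2/(2*δ) + R*(1+2*b) + 1, by positivity, ?_⟩
  intro u u' hu0 hderiv hInt2 hInt2' hInt3 hL2
  have hEb : ∀ x : ℝ, Real.exp (b*x) * Real.exp (b*x) = Real.exp (2*b*x) := fun x => by
    rw [← Real.exp_add]; ring_nf
  set IA := ∫ x in Ioi (0:ℝ), (u' x)^2 * Real.exp (2*b*x) with hIAdef
  set IB := ∫ x in Ioi (0:ℝ), (u x)^2 * Real.exp (2*b*x) with hIBdef
  have hIA0 : 0 ≤ IA := by
    rw [hIAdef]; exact setIntegral_nonneg measurableSet_Ioi fun x _ => by positivity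
  have hIB0 : 0 ≤ IB := by
    rw [hIBdef]; exact setIntegral_nonneg measurableSet_Ioi fun x _ => by positivity
  set A := Real.sqrt IA with hAdef
  set B := Real.sqrt IB with hBdef
  have hA0 : 0 ≤ A := Real.sqrt_nonneg _
  have hB0 : 0 ≤ B := Real.sqrt_nonneg _
  have hA2 : A^2 = IA := Real.sq_sqrt hIA0
  have hB2 : B^2 = IB := Real.sq_sqrt hIB0
  clear_value A B IA IB
  -- measurability
  have humeas : AEStronglyMeasurable u (volume.restrict (Ioi 0)) := by
    have h : ContinuousOn u (Ioi 0) := fun x hx =>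
      ((hderiv x (mem_Ici.mpr (le_of_lt hx))).continuousAt).continuousWithinAt
    exact h.aestronglyMeasurable measurableSet_Ioi
  have hu'meas : AEStronglyMeasurable u' (volume.restrict (Ioi 0)) := by
    refine (measurable_deriv u).aestronglyMeasurable.congr ?_
    filter_upwards [ae_restrict_mem measurableSet_Ioi] with x hx
    exact ((hderiv x (mem_Ici.mpr (le_of_lt hx))).deriv)
  have hu2meas : AEStronglyMeasurable (fun x => (u x)^2) (volume.restrict (Ioi 0)) :=
    (humeas.aemeasurable.pow_const 2).aestronglyMeasurable
  have hexpb : Continuous fun x : ℝ => Real.exp (b*x) :=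
    Real.continuous_exp.comp (continuous_const.mul continuous_id)
  have hexp2b : Continuous fun x : ℝ => Real.exp (2*b*x) :=
    Real.continuous_exp.comp (continuous_const.mul continuous_id)
  have hfmeas : AEStronglyMeasurable (fun x => u x * Real.exp (b*x))
      (volume.restrict (Ioi 0)) := humeas.mul hexpb.aestronglyMeasurable
  have hgmeas : AEStronglyMeasurable (fun x => u' x * Real.exp (b*x))
      (volume.restrict (Ioi 0)) := hu'meas.mul hexpb.aestronglyMeasurable
  -- squares
  have eqf : (fun x => (u x * Real.exp (b*x))^2) = fun x => (u x)^2 * Real.exp (2*b*x) :=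
    funext fun x => by rw [mul_pow, pow_two (Real.exp (b*x)), hEb]
  have eqg : (fun x => (u' x * Real.exp (b*x))^2) = fun x => (u' x)^2 * Real.exp (2*b*x) :=
    funext fun x => by rw [mul_pow, pow_two (Real.exp (b*x)), hEb]
  have hf2int : Integrable (fun x => (u x * Real.exp (b*x))^2) (volume.restrict (Ioi 0)) := by
    rw [eqf]; exact hInt2
  have hg2int : Integrable (fun x => (u' x * Real.exp (b*x))^2) (volume.restrict (Ioi 0)) := by
    rw [eqg]; exact hInt2'
  have hL2int : Integrable (fun x => (u x)^2) (volume.restrict (Ioi 0)) := by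
    refine hInt2.mono' hu2meas ?_
    filter_upwards [ae_restrict_mem measurableSet_Ioi] with t ht
    rw [Real.norm_eq_abs, abs_of_nonneg (sq_nonneg _)]
    have h1 : (1:ℝ) ≤ Real.exp (2*b*t) := Real.one_le_exp (by nlinarith [mem_Ioi.mp ht])
    exact le_mul_of_one_le_right (sq_nonneg _) h1
  -- Cauchy–Schwarz for u u' e^{2bx}
  have hCS1 : (∫ t in Ioi (0:ℝ), |u t * u' t| * Real.exp (2*b*t)) ≤ B * A := by
    have h := cs_aux hfmeas hgmeas hf2int hg2int
    rw [eqf, eqg, ← hIBdef, ← hIAdef, ← hAdef, ← hBdef] at h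
    have e : ∀ t : ℝ, |(u t * Real.exp (b*t)) * (u' t * Real.exp (b*t))|
        = |u t * u' t| * Real.exp (2*b*t) := fun t => by
      rw [show (u t * Real.exp (b*t)) * (u' t * Real.exp (b*t))
          = (u t * u' t) * (Real.exp (b*t) * Real.exp (b*t)) by ring, hEb,
        abs_mul, abs_of_pos (Real.exp_pos _)]
    simp only [e] at h
    exact h
  -- integrability of |u u'| e^{2bt}
  have hdom : Integrable (fun t => (u t)^2 * Real.exp (2*b*t) + (u' t)^2 * Real.exp (2*b*t))
      (volume.restrict (Ioi 0)) := hInt2.add hInt2'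
  have hprodE_int : Integrable (fun t => |u t * u' t| * Real.exp (2*b*t))
      (volume.restrict (Ioi 0)) := by
    have habsmeas : AEStronglyMeasurable (fun t => |u t * u' t|) (volume.restrict (Ioi 0)) := by
      simpa [Real.norm_eq_abs, ← abs_mul] using (humeas.mul hu'meas).norm
    refine hdom.mono' (habsmeas.mul hexp2b.aestronglyMeasurable)
      (ae_of_all _ fun t => ?_)
    have hE := (Real.exp_pos (2*b*t)).le
    rw [Real.norm_eq_abs, abs_mul, abs_abs, abs_of_nonneg hE, abs_mul]
    have h2 : |u t| * |u' t| ≤ (u t)^2 + (u' t)^2 := by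
      nlinarith [sq_nonneg (|u t| - |u' t|), sq_abs (u t), sq_abs (u' t),
        mul_nonneg (abs_nonneg (u t)) (abs_nonneg (u' t))]
    have h3 := mul_le_mul_of_nonneg_right h2 hE
    linarith [h3]
  -- pointwise bound for the derivative integrand
  have hptw : ∀ t : ℝ, (2*u t*u' t + 2*b*(u t)^2) * Real.exp (2*b*t)
      ≤ 2*(|u t * u' t| * Real.exp (2*b*t)) + 2*b*((u t)^2 * Real.exp (2*b*t)) := by
    intro t
    have hE := (Real.exp_pos (2*b*t)).le
    have h1 : 2*u t*u' t + 2*b*(u t)^2 ≤ 2*|u t * u' t| + 2*b*(u t)^2 := by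
      have := le_abs_self (u t * u' t)
      nlinarith
    have h3 := mul_le_mul_of_nonneg_right h1 hE
    nlinarith [h3]
  have hmaj : IntegrableOn
      (fun t => 2*(|u t * u' t| * Real.exp (2*b*t)) + 2*b*((u t)^2 * Real.exp (2*b*t)))
      (Ioi 0) := (hprodE_int.const_mul 2).add (hInt2.const_mul (2*b))
  have hGmeas : AEStronglyMeasurable
      (fun t => (2*u t*u' t + 2*b*(u t)^2) * Real.exp (2*b*t)) (volume.restrict (Ioi 0)) := by
    refine AEStronglyMeasurable.mul ?_ hexp2b.aestronglyMeasurable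
    exact ((aestronglyMeasurable_const.mul humeas).mul hu'meas).add
      (aestronglyMeasurable_const.mul hu2meas)
  have hGint : IntegrableOn (fun t => (2*u t*u' t + 2*b*(u t)^2) * Real.exp (2*b*t)) (Ioi 0) := by
    refine hmaj.mono' hGmeas (ae_of_all _ fun t => ?_)
    have hE := (Real.exp_pos (2*b*t)).le
    rw [Real.norm_eq_abs, abs_mul, abs_of_nonneg hE]
    have h1 : |2*u t*u' t + 2*b*(u t)^2| ≤ 2*|u t * u' t| + 2*b*(u t)^2 := by
      refine (abs_add_le _ _).trans ?_
      have h2 : |2*u t*u' t| = 2*|u t * u' t| := by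
        rw [show 2*u t*u' t = 2*(u t * u' t) by ring, abs_mul, abs_two]
      have h3 : |2*b*(u t)^2| = 2*b*(u t)^2 := abs_of_nonneg (by positivity)
      rw [h2, h3]
    have h4 := mul_le_mul_of_nonneg_right h1 hE
    nlinarith [h4]
  -- key sup bound
  have key : ∀ x : ℝ, 0 ≤ x → (u x)^2 * Real.exp (2*b*x) ≤ 2*(A*B) + 2*b*B^2 := by
    intro x hx
    have hFx : (u x)^2 * Real.exp (2*b*x)
        = ∫ t in (0:ℝ)..x, (2*u t*u' t + 2*b*(u t)^2) * Real.exp (2*b*t) := by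
      have hder : ∀ t ∈ uIcc (0:ℝ) x, HasDerivAt (fun y => (u y)^2 * Real.exp (2*b*y))
          ((2*u t*u' t + 2*b*(u t)^2) * Real.exp (2*b*t)) t := by
        intro t ht
        rw [uIcc_of_le hx] at ht
        have ht0 : (0:ℝ) ≤ t := ht.1
        have h1 : HasDerivAt (fun y => (u y)^2) (2*u t*u' t) t := by
          have h := (hderiv t ht0).pow 2
          refine h.congr_deriv ?_
          push_cast
          ring
        have h2 : HasDerivAt (fun y => Real.exp (2*b*y)) (2*b*Real.exp (2*b*t)) t := by
          have hid : HasDerivAt (fun y : ℝ => 2*b*y) (2*b) t := by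
            simpa using (hasDerivAt_id t).const_mul (2*b)
          have := hid.exp
          simpa [mul_comm] using this
        have h3 := h1.mul h2
        refine h3.congr_deriv ?_
        ring
      have hii : IntervalIntegrable
          (fun t => (2*u t*u' t + 2*b*(u t)^2) * Real.exp (2*b*t)) volume 0 x := by
        rw [intervalIntegrable_iff_integrableOn_Ioc_of_le hx]
        exact hGint.mono_set Ioc_subset_Ioi_self
      have h := intervalIntegral.integral_eq_sub_of_hasDerivAt hder hii
      rw [h, hu0]
      norm_num
    rw [hFx]
    have hb1 : (∫ t in (0:ℝ)..x, (2*u t*u' t + 2*b*(u t)^2) * Real.exp (2*b*t))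
        = ∫ t in Ioc (0:ℝ) x, (2*u t*u' t + 2*b*(u t)^2) * Real.exp (2*b*t) :=
      intervalIntegral.integral_of_le hx
    rw [hb1]
    calc (∫ t in Ioc (0:ℝ) x, (2*u t*u' t + 2*b*(u t)^2) * Real.exp (2*b*t))
        ≤ ∫ t in Ioc (0:ℝ) x,
            (2*(|u t * u' t| * Real.exp (2*b*t)) + 2*b*((u t)^2 * Real.exp (2*b*t))) :=
          setIntegral_mono (hGint.mono_set Ioc_subset_Ioi_self)
            (hmaj.mono_set Ioc_subset_Ioi_self) hptw
      _ ≤ ∫ t in Ioi (0:ℝ),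
            (2*(|u t * u' t| * Real.exp (2*b*t)) + 2*b*((u t)^2 * Real.exp (2*b*t))) := by
          refine setIntegral_mono_set hmaj (ae_of_all _ fun t => ?_)
            (HasSubset.Subset.eventuallyLE Ioc_subset_Ioi_self)
          positivity
      _ = 2*(∫ t in Ioi (0:ℝ), |u t * u' t| * Real.exp (2*b*t)) + 2*b*IB := by
          rw [integral_add (hprodE_int.const_mul 2) (hInt2.const_mul (2*b)),
            integral_const_mul, integral_const_mul, hIBdef]
      _ ≤ 2*(B*A) + 2*b*IB := by
          have h3 := mul_pos hb (by norm_num : (0:ℝ) < 2)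
          nlinarith [hCS1, hb.le]
      _ = 2*(A*B) + 2*b*B^2 := by rw [hB2]; ring
  -- weighted L² with weight e^{bx}
  have hw_int : IntegrableOn (fun t => (u t)^2 * Real.exp (b*t)) (Ioi 0) := by
    refine hInt2.mono' (hu2meas.mul hexpb.aestronglyMeasurable) ?_
    filter_upwards [ae_restrict_mem measurableSet_Ioi] with t ht
    rw [Real.norm_eq_abs, abs_of_nonneg (by positivity)]
    have h1 : Real.exp (b*t) ≤ Real.exp (2*b*t) :=
      Real.exp_le_exp.mpr (by nlinarith [mem_Ioi.mp ht])
    exact mul_le_mul_of_nonneg_left h1 (sq_nonneg _)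
  have hstep2 : (∫ t in Ioi (0:ℝ), (u t)^2 * Real.exp (b*t)) ≤ B * R := by
    have h := cs_aux hfmeas humeas hf2int hL2int
    rw [eqf, ← hIBdef, ← hBdef] at h
    have e : ∀ t : ℝ, |(u t * Real.exp (b*t)) * u t| = (u t)^2 * Real.exp (b*t) := fun t => by
      rw [show (u t * Real.exp (b*t)) * u t = (u t)^2 * Real.exp (b*t) by ring]
      exact abs_of_nonneg (by positivity)
    simp only [e] at h
    refine h.trans ?_
    exact mul_le_mul_of_nonneg_left hL2 hB0
  -- step 3
  have hM0 : 0 ≤ 2*(A*B) + 2*b*B^2 := by nlinarith [mul_nonneg hA0 hB0, mul_nonneg hb.le (sq_nonneg B)]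
  have hstep3 : (∫ t in Ioi (0:ℝ), |u t|^3 * Real.exp (2*b*t))
      ≤ Real.sqrt (2*(A*B) + 2*b*B^2) * ∫ t in Ioi (0:ℝ), (u t)^2 * Real.exp (b*t) := by
    rw [← integral_const_mul (Real.sqrt (2*(A*B) + 2*b*B^2)) (fun t => (u t)^2 * Real.exp (b*t))]
    refine setIntegral_mono_on hInt3 (hw_int.const_mul _) measurableSet_Ioi fun t ht => ?_
    have ht0 : (0:ℝ) < t := mem_Ioi.mp ht
    have h1 : (|u t| * Real.exp (b*t))^2 ≤ 2*(A*B) + 2*b*B^2 := by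
      rw [mul_pow, sq_abs, pow_two (Real.exp (b*t)), hEb]
      exact key t ht0.le
    have h2 : |u t| * Real.exp (b*t) ≤ Real.sqrt (2*(A*B) + 2*b*B^2) :=
      Real.le_sqrt_of_sq_le h1
    calc |u t|^3 * Real.exp (2*b*t)
        = (|u t| * Real.exp (b*t)) * ((u t)^2 * Real.exp (b*t)) := by
          rw [← hEb t, pow_succ, sq_abs]; ring
      _ ≤ Real.sqrt (2*(A*B) + 2*b*B^2) * ((u t)^2 * Real.exp (b*t)) :=
          mul_le_mul_of_nonneg_right h2 (by positivity)
  -- conclusion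
  calc (∫ t in Ioi (0:ℝ), |u t|^3 * Real.exp (2*b*t))
      ≤ Real.sqrt (2*(A*B) + 2*b*B^2) * ∫ t in Ioi (0:ℝ), (u t)^2 * Real.exp (b*t) := hstep3
    _ ≤ Real.sqrt (2*(A*B) + 2*b*B^2) * (B * R) :=
        mul_le_mul_of_nonneg_left hstep2 (Real.sqrt_nonneg _)
    _ ≤ δ*A^2 + (R^2/(2*δ) + R*(1+2*b) + 1)*B^2 := final_aux b R δ A B hb hR hδ hA0 hB0
    _ = δ*IA + (R^2/(2*δ) + R*(1+2*b) + 1)*IB := by rw [hA2, hB2]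
end
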